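/- Let A be a finite nonempty set with U, F : A → ℝ, and let S(η) ⊆ A denote the set of maximizers of U + η·F for η ≥ 0. If 0 ≤ η < η' and S(η) ∩ S(η') ≠ ∅, then for every a ∈ S(η) and a' ∈ S(η'), F(a') ≥ F(a) and U(a) ≥ U(a'). -/
import Mathlib

/-- Monotone trade-off along increasing fairness weights: for η < η' with
overlapping maximizer sets, any maximizer at η' has fairness at least that of
any maximizer at η, and utility at most that of any maximizer at η. -/
theorem decaf_monotone_pareto_traversal
    {A : Type*} [Fintype A] [Nonempty A] (U F : A → ℝ) (η η' : ℝ)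
    (hη : 0 ≤ η) (hηη' : η < η')
    (hinter : ∃ c : A,
      (∀ b : A, U b + η * F b ≤ U c + η * F c) ∧
      (∀ b : A, U b + η' * F b ≤ U c + η' * F c)) :
    ∀ a a' : A,
      (∀ b : A, U b + η * F b ≤ U a + η * F a) →
      (∀ b : A, U b + η' * F b ≤ U a' + η' * F a') →
      F a' ≥ F a ∧ U a ≥ U a' := by
  obtain ⟨c, hc, hc'⟩ := hinter
  intro a a' ha ha'
  have h1 := ha c
  have h2 := hc a
  have h3 := ha' c
  have h4 := hc' a
  have h5 := ha a'
  have h6 := ha' a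
  have hF : F a ≤ F a' := by nlinarith
  constructor
  · exact hF
  · nlinarith
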